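/- arXiv:1001.4030 — 2 statements merged into one kernel-verified Lean document; each statement's English description precedes it below -/
import Mathlib

section
/- Let α ∈ (0,1) be irrational. Define α₀ = min over integers m of |α − m| and, inductively, α_{n+1} = min over integers m of |1/α_n − m| for n ≥ 0 (so each α_n ∈ (0,1/2) for n ≥ 1). Let qₙ denote the denominators of the convergents of the regular continued fraction expansion of α. Then the sequence s_k = α₁ · α₂^{α₁} · α₃^{α₁α₂} · α₄^{α₁α₂α₃} ⋯ α_k^{α₁⋯α_{k−1}} converges to 0 as k → ∞ if and only if the Brjuno series ∑_{n≥0} (log q_{n+1})/qₙ diverges. -/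
open MeasureTheory Filter

/-- The Gauss map orbit of `α`: `x₀ = α`, `x_{n+1} = {1/x_n}`. -/
noncomputable def gaussIter (α : ℝ) : ℕ → ℝ
  | 0 => α
  | n + 1 => Int.fract (1 / gaussIter α n)

/-- `cfa α n` is the partial quotient `a_{n+1}` of the regular continued fraction of `α`. -/
noncomputable def cfa (α : ℝ) (n : ℕ) : ℤ := ⌊1 / gaussIter α n⌋

/-- `cfq α n = qₙ`, the denominator of the `n`-th convergent of the regular continued
fraction of `α`: `q₀ = 1`, `q₁ = a₁`, `q_{n+1} = a_{n+1} qₙ + q_{n-1}`. -/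
noncomputable def cfq (α : ℝ) : ℕ → ℤ
  | 0 => 1
  | 1 => cfa α 0
  | n + 2 => cfa α (n + 1) * cfq α (n + 1) + cfq α n

/-- `α` is a Brjuno number if `∑ (log q_{n+1})/qₙ` converges. -/
def IsBrjuno (α : ℝ) : Prop :=
  Summable fun n : ℕ => Real.log ((cfq α (n + 1) : ℝ)) / ((cfq α n : ℝ))

/-- `Irr_N`: irrational numbers in `(0,1)` whose partial quotients are all at least `N`. -/
def IrrN (N : ℕ) : Set ℝ :=
  {α | α ∈ Set.Ioo (0 : ℝ) 1 ∧ Irrational α ∧ ∀ n : ℕ, (N : ℤ) ≤ cfa α n}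

/-- The modified continued fraction data of the paper: `α₀ = ‖α‖` (distance of `α` to the
nearest integer) and `α_{n+1} = ‖1/αₙ‖`. -/
noncomputable def modCF (α : ℝ) : ℕ → ℝ
  | 0 => |α - round α|
  | n + 1 => |1 / modCF α n - round (1 / modCF α n)|

/-- `sProd α k = α₁ · α₂^{α₁} · α₃^{α₁α₂} ⋯ α_k^{α₁⋯α_{k-1}}` (real exponents). -/
noncomputable def sProd (α : ℝ) (k : ℕ) : ℝ :=
  ∏ j ∈ Finset.range k,
    (modCF α (j + 1)) ^ (∏ i ∈ Finset.range j, modCF α (i + 1))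

section Dev
variable {α : ℝ} (hα : α ∈ Set.Ioo (0 : ℝ) 1) (hirr : Irrational α)

include hα hirr in
lemma gauss_basic : ∀ n, Irrational (gaussIter α n) ∧ gaussIter α n ∈ Set.Ioo (0:ℝ) 1 := by
  intro n
  induction n with
  | zero => exact ⟨hirr, hα⟩
  | succ n ih =>
    obtain ⟨hi, h0, h1⟩ := ih
    have hne : gaussIter α n ≠ 0 := ne_of_gt h0
    have hinv : Irrational (1 / gaussIter α n) := by rw [one_div]; exact hi.inv
    have hfr : Irrational (Int.fract (1 / gaussIter α n)) := by
      unfold Int.fract; exact hinv.sub_intCast _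
    refine ⟨by simpa [gaussIter] using hfr, ?_, ?_⟩
    · show (0:ℝ) < gaussIter α (n+1)
      have hne0 : Int.fract (1 / gaussIter α n) ≠ 0 := by
        intro h; rw [h] at hfr; exact hfr ⟨0, by norm_num⟩
      have := lt_of_le_of_ne (Int.fract_nonneg (1 / gaussIter α n)) (Ne.symm hne0)
      simpa [gaussIter] using this
    · show gaussIter α (n+1) < 1
      simpa [gaussIter] using Int.fract_lt_one (1 / gaussIter α n)

include hα hirr

lemma gauss_pos (n : ℕ) : 0 < gaussIter α n := (gauss_basic hα hirr n).2.1
lemma gauss_lt_one (n : ℕ) : gaussIter α n < 1 := (gauss_basic hα hirr n).2.2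
lemma gauss_irr (n : ℕ) : Irrational (gaussIter α n) := (gauss_basic hα hirr n).1

lemma one_lt_inv_gauss (n : ℕ) : 1 < 1 / gaussIter α n := by
  rw [lt_div_iff₀ (gauss_pos hα hirr n)]
  have := gauss_lt_one hα hirr n; linarith

lemma cfa_ge_one (n : ℕ) : 1 ≤ cfa α n := by
  have := one_lt_inv_gauss hα hirr n
  exact Int.le_floor.mpr (by push_cast; linarith)

omit hα hirr in
lemma gauss_succ (n : ℕ) : gaussIter α (n+1) = 1 / gaussIter α n - cfa α n := by
  show Int.fract _ = _
  rw [Int.fract]; rfl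

omit hα hirr in
lemma inv_gauss_eq (n : ℕ) : 1 / gaussIter α n = cfa α n + gaussIter α (n+1) := by
  rw [gauss_succ]; ring

lemma cfq_ge_one : ∀ n, 1 ≤ cfq α n := by
  intro n
  induction n using Nat.strong_induction_on with
  | _ n ih =>
    match n with
    | 0 => simp [cfq]
    | 1 => exact cfa_ge_one hα hirr 0
    | n + 2 =>
      have h1 := ih (n+1) (by omega)
      have h0 := ih n (by omega)
      have ha := cfa_ge_one hα hirr (n+1)
      show 1 ≤ cfa α (n+1) * cfq α (n+1) + cfq α n
      nlinarith

lemma cfq_mono (n : ℕ) : cfq α n ≤ cfq α (n+1) := by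
  match n with
  | 0 => simpa [cfq] using cfa_ge_one hα hirr 0
  | n + 1 =>
    have h1 := cfq_ge_one hα hirr (n+1)
    have h0 := cfq_ge_one hα hirr n
    have ha := cfa_ge_one hα hirr (n+1)
    show cfq α (n+1) ≤ cfa α (n+1) * cfq α (n+1) + cfq α n
    nlinarith

lemma cfq_two_step (n : ℕ) : 2 * cfq α n ≤ cfq α (n+2) := by
  have h1 := cfq_ge_one hα hirr (n+1)
  have h0 := cfq_ge_one hα hirr n
  have ha := cfa_ge_one hα hirr (n+1)
  have hm := cfq_mono hα hirr n
  show 2 * cfq α n ≤ cfa α (n+1) * cfq α (n+1) + cfq α n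
  nlinarith

end Dev

noncomputable def bg (α : ℝ) (n : ℕ) : ℝ := ∏ i ∈ Finset.range n, gaussIter α i

section Dev2
variable {α : ℝ} (hα : α ∈ Set.Ioo (0 : ℝ) 1) (hirr : Irrational α)

omit hα hirr in
lemma bg_succ (n : ℕ) : bg α (n+1) = bg α n * gaussIter α n := Finset.prod_range_succ _ _

include hα hirr

lemma bg_pos (n : ℕ) : 0 < bg α n :=
  Finset.prod_pos fun i _ => gauss_pos hα hirr i

lemma bg_identity : ∀ n, bg α (n+1) * ((cfq α (n+1) : ℝ) + (cfq α n : ℝ) * gaussIter α (n+1)) = 1 := by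
  intro n
  induction n with
  | zero =>
    have hx0 : gaussIter α 0 = α := rfl
    have h0 : (0:ℝ) < α := hα.1
    have := inv_gauss_eq (α := α) 0
    show bg α 1 * ((cfq α 1 : ℝ) + (cfq α 0 : ℝ) * gaussIter α 1) = 1
    rw [show bg α 1 = α by simp [bg, Finset.prod_range_one, hx0]]
    rw [show cfq α 1 = cfa α 0 from rfl, show cfq α 0 = 1 from rfl]
    rw [hx0] at this
    push_cast
    rw [one_mul, ← this]
    field_simp
  | succ n ih =>
    have hxp := gauss_pos hα hirr (n+1)
    have hrec : (cfq α (n+2) : ℝ) = (cfa α (n+1) : ℝ) * (cfq α (n+1) : ℝ) + (cfq α n : ℝ) := by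
      rw [show cfq α (n+2) = cfa α (n+1) * cfq α (n+1) + cfq α n from rfl]; push_cast; ring
    have hx : gaussIter α (n+2) = 1 / gaussIter α (n+1) - cfa α (n+1) := gauss_succ _
    rw [bg_succ, hx, hrec]
    have hne : gaussIter α (n+1) ≠ 0 := ne_of_gt hxp
    field_simp
    field_simp at ih
    nlinarith [ih]

lemma bg_cfq_le (n : ℕ) : (cfq α n : ℝ) * bg α n ≤ 1 := by
  match n with
  | 0 => simp [bg, cfq]
  | n + 1 =>
    have hid := bg_identity hα hirr n
    have hb := bg_pos hα hirr (n+1)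
    have hq0 : (1:ℝ) ≤ (cfq α n : ℝ) := by exact_mod_cast cfq_ge_one hα hirr n
    have hx := gauss_pos hα hirr (n+1)
    nlinarith [mul_pos (mul_pos hb (lt_of_lt_of_le zero_lt_one hq0)) hx]

lemma one_le_two_bg_cfq (n : ℕ) : 1 ≤ 2 * (cfq α n : ℝ) * bg α n := by
  match n with
  | 0 => simp [bg, cfq]
  | n + 1 =>
    have hid := bg_identity hα hirr n
    have hb := bg_pos hα hirr (n+1)
    have hq0 : (1:ℝ) ≤ (cfq α n : ℝ) := by exact_mod_cast cfq_ge_one hα hirr n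
    have hq1 : (cfq α n : ℝ) ≤ (cfq α (n+1) : ℝ) := by exact_mod_cast cfq_mono hα hirr n
    have hx := gauss_pos hα hirr (n+1)
    have hx1 := gauss_lt_one hα hirr (n+1)
    have h1 : (cfq α n : ℝ) * gaussIter α (n+1) ≤ (cfq α (n+1) : ℝ) := by nlinarith
    nlinarith [mul_le_mul_of_nonneg_left h1 hb.le]

lemma cfq_growth : ∀ n, (Real.sqrt 2)^n ≤ Real.sqrt 2 * (cfq α n : ℝ) := by
  have hs : (1:ℝ) ≤ Real.sqrt 2 := by
    rw [show (1:ℝ) = Real.sqrt 1 by simp]; exact Real.sqrt_le_sqrt (by norm_num)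
  intro n
  induction n using Nat.strong_induction_on with
  | _ n ih =>
    match n with
    | 0 =>
      simp only [pow_zero, show cfq α 0 = 1 from rfl, Int.cast_one, mul_one]
      exact hs
    | 1 =>
      have : (1:ℝ) ≤ (cfq α 1 : ℝ) := by exact_mod_cast cfq_ge_one hα hirr 1
      calc (Real.sqrt 2)^1 = Real.sqrt 2 * 1 := by ring
        _ ≤ Real.sqrt 2 * (cfq α 1 : ℝ) := by nlinarith
    | n + 2 =>
      have h2 : (2:ℝ) * (cfq α n : ℝ) ≤ (cfq α (n+2) : ℝ) := by exact_mod_cast cfq_two_step hα hirr n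
      have hih := ih n (by omega)
      have hsq : Real.sqrt 2 * Real.sqrt 2 = 2 := Real.mul_self_sqrt (by norm_num)
      calc (Real.sqrt 2)^(n+2) = (Real.sqrt 2 * Real.sqrt 2) * (Real.sqrt 2)^n := by ring
        _ = 2 * (Real.sqrt 2)^n := by rw [hsq]
        _ ≤ 2 * (Real.sqrt 2 * (cfq α n : ℝ)) := by
            have : (0:ℝ) ≤ 2 := by norm_num
            nlinarith
        _ = Real.sqrt 2 * (2 * (cfq α n : ℝ)) := by ring
        _ ≤ Real.sqrt 2 * (cfq α (n+2) : ℝ) := by nlinarith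

lemma cfq_real_pos (n : ℕ) : (0:ℝ) < (cfq α n : ℝ) := by
  have := cfq_ge_one hα hirr n; exact_mod_cast lt_of_lt_of_le zero_lt_one (by exact_mod_cast this)

lemma inv_cfq_le (n : ℕ) : 1 / (cfq α n : ℝ) ≤ Real.sqrt 2 * ((Real.sqrt 2)⁻¹)^n := by
  have hsp : (0:ℝ) < Real.sqrt 2 := Real.sqrt_pos.mpr (by norm_num)
  have hg := cfq_growth hα hirr n
  have hq := cfq_real_pos hα hirr n
  have heq : Real.sqrt 2 * ((Real.sqrt 2)⁻¹)^n = Real.sqrt 2 / (Real.sqrt 2)^n := by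
    rw [inv_pow, div_eq_mul_inv]
  rw [heq, div_le_div_iff₀ hq (pow_pos hsp n)]
  nlinarith

lemma summable_inv_cfq : Summable (fun n => 1 / (cfq α n : ℝ)) := by
  have hsp : (0:ℝ) < Real.sqrt 2 := Real.sqrt_pos.mpr (by norm_num)
  have hlt : (Real.sqrt 2)⁻¹ < 1 := by
    rw [inv_lt_one_iff₀]
    right
    have : Real.sqrt 1 < Real.sqrt 2 := by
      apply Real.sqrt_lt_sqrt <;> norm_num
    simpa using this
  have hgeo : Summable (fun n : ℕ => Real.sqrt 2 * ((Real.sqrt 2)⁻¹)^n) :=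
    (summable_geometric_of_lt_one (inv_nonneg.mpr (Real.sqrt_nonneg 2)) hlt).mul_left _
  exact Summable.of_nonneg_of_le
    (fun n => by have := cfq_real_pos hα hirr n; positivity)
    (fun n => inv_cfq_le hα hirr n) hgeo

lemma summable_bg : Summable (fun n => bg α n) := by
  refine Summable.of_nonneg_of_le (fun n => le_of_lt (bg_pos hα hirr n)) (fun n => ?_) (summable_inv_cfq hα hirr)
  have h := bg_cfq_le hα hirr n
  have hq := cfq_real_pos hα hirr n
  rw [le_div_iff₀ hq]; linarith [mul_comm (bg α n) ((cfq α n : ℝ))]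

end Dev2

lemma my_sqrt_pow (a : ℝ) (ha : 0 ≤ a) : ∀ n : ℕ, Real.sqrt (a^n) = (Real.sqrt a)^n := by
  intro n
  induction n with
  | zero => simp
  | succ n ih => rw [pow_succ, pow_succ, Real.sqrt_mul (pow_nonneg ha n), ih]

noncomputable def ug (α : ℝ) (n : ℕ) : ℝ := bg α n * Real.log (1 / gaussIter α n)

section Dev3
variable {α : ℝ} (hα : α ∈ Set.Ioo (0 : ℝ) 1) (hirr : Irrational α)
include hα hirr

lemma one_le_cfq_real (n : ℕ) : (1:ℝ) ≤ (cfq α n : ℝ) := by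
  exact_mod_cast cfq_ge_one hα hirr n

lemma log_cfq_nonneg (n : ℕ) : 0 ≤ Real.log (cfq α n : ℝ) :=
  Real.log_nonneg (one_le_cfq_real hα hirr n)

lemma summable_log_cfq : Summable (fun n => Real.log (cfq α n : ℝ) / (cfq α n : ℝ)) := by
  have hsp : (0:ℝ) < Real.sqrt 2 := Real.sqrt_pos.mpr (by norm_num)
  have hr0 : (0:ℝ) ≤ Real.sqrt ((Real.sqrt 2)⁻¹) := Real.sqrt_nonneg _
  have hr1 : Real.sqrt ((Real.sqrt 2)⁻¹) < 1 := by
    rw [show (1:ℝ) = Real.sqrt 1 by simp]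
    apply Real.sqrt_lt_sqrt (by positivity)
    rw [inv_lt_one_iff₀]; right
    rw [show (1:ℝ) = Real.sqrt 1 by simp]
    apply Real.sqrt_lt_sqrt <;> norm_num
  have hgeo : Summable (fun n : ℕ => (2 * Real.sqrt (Real.sqrt 2)) * (Real.sqrt ((Real.sqrt 2)⁻¹))^n) :=
    (summable_geometric_of_lt_one hr0 hr1).mul_left _
  refine Summable.of_nonneg_of_le (fun n => ?_) (fun n => ?_) hgeo
  · have hq := cfq_real_pos hα hirr n
    have := log_cfq_nonneg hα hirr n
    positivity
  · have hq := cfq_real_pos hα hirr n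
    have hq1 := one_le_cfq_real hα hirr n
    have hsq : (0:ℝ) < Real.sqrt (cfq α n : ℝ) := Real.sqrt_pos.mpr hq
    have hlog : Real.log (cfq α n : ℝ) ≤ 2 * Real.sqrt (cfq α n : ℝ) := by
      have h1 : Real.log (Real.sqrt (cfq α n : ℝ)) ≤ Real.sqrt (cfq α n : ℝ) - 1 :=
        Real.log_le_sub_one_of_pos hsq
      have h2 : Real.log (Real.sqrt (cfq α n : ℝ)) = Real.log (cfq α n : ℝ) / 2 :=
        Real.log_sqrt hq.le
      linarith
    have hQ : (cfq α n : ℝ) = Real.sqrt (cfq α n : ℝ) * Real.sqrt (cfq α n : ℝ) :=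
      (Real.mul_self_sqrt hq.le).symm
    have step1 : Real.log (cfq α n : ℝ) / (cfq α n : ℝ) ≤ 2 / Real.sqrt (cfq α n : ℝ) := by
      rw [div_le_div_iff₀ hq hsq]
      calc Real.log (cfq α n : ℝ) * Real.sqrt (cfq α n : ℝ)
          ≤ (2 * Real.sqrt (cfq α n : ℝ)) * Real.sqrt (cfq α n : ℝ) :=
            mul_le_mul_of_nonneg_right hlog hsq.le
        _ = 2 * (cfq α n : ℝ) := by rw [mul_assoc, ← hQ]
    refine step1.trans ?_
    have step2 : 2 / Real.sqrt (cfq α n : ℝ) = 2 * Real.sqrt (1 / (cfq α n : ℝ)) := by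
      rw [one_div, Real.sqrt_inv, div_eq_mul_inv]
    rw [step2]
    have step3 : Real.sqrt (1 / (cfq α n : ℝ)) ≤ Real.sqrt (Real.sqrt 2 * ((Real.sqrt 2)⁻¹)^n) :=
      Real.sqrt_le_sqrt (inv_cfq_le hα hirr n)
    calc 2 * Real.sqrt (1 / (cfq α n : ℝ)) ≤ 2 * Real.sqrt (Real.sqrt 2 * ((Real.sqrt 2)⁻¹)^n) := by
          linarith
      _ = (2 * Real.sqrt (Real.sqrt 2)) * (Real.sqrt ((Real.sqrt 2)⁻¹))^n := by
          rw [Real.sqrt_mul hsp.le, my_sqrt_pow _ (by positivity)]; ring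

lemma cfq_succ_le_int (n : ℕ) : cfq α (n+1) ≤ (cfa α n + 1) * cfq α n := by
  match n with
  | 0 =>
    show cfa α 0 ≤ (cfa α 0 + 1) * 1
    omega
  | n + 1 =>
    have hm := cfq_mono hα hirr n
    show cfa α (n+1) * cfq α (n+1) + cfq α n ≤ (cfa α (n+1) + 1) * cfq α (n+1)
    nlinarith

lemma cfa_le_cfq_succ (n : ℕ) : cfa α n * cfq α n ≤ cfq α (n+1) := by
  match n with
  | 0 => show cfa α 0 * 1 ≤ cfa α 0; omega
  | n + 1 =>
    have h0 := cfq_ge_one hα hirr n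
    show cfa α (n+1) * cfq α (n+1) ≤ cfa α (n+1) * cfq α (n+1) + cfq α n
    omega

lemma log_inv_gauss_nonneg (n : ℕ) : 0 ≤ Real.log (1 / gaussIter α n) :=
  Real.log_nonneg (le_of_lt (one_lt_inv_gauss hα hirr n))

lemma log_K1 (n : ℕ) :
    Real.log (cfq α (n+1) : ℝ) - Real.log (cfq α n : ℝ) ≤ Real.log 2 + Real.log (1 / gaussIter α n) := by
  have hx := gauss_pos hα hirr n
  have hq := cfq_real_pos hα hirr n
  have hq1 := cfq_real_pos hα hirr (n+1)
  have ha : (cfa α n : ℝ) + 1 ≤ 2 / gaussIter α n := by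
    have h1 : (cfa α n : ℝ) ≤ 1 / gaussIter α n := Int.floor_le _
    have h2 : (1:ℝ) ≤ 1 / gaussIter α n := le_of_lt (one_lt_inv_gauss hα hirr n)
    have : 2 / gaussIter α n = 1 / gaussIter α n + 1 / gaussIter α n := by ring
    linarith [this]
  have hk : (cfq α (n+1) : ℝ) ≤ (2 / gaussIter α n) * (cfq α n : ℝ) := by
    have h := cfq_succ_le_int hα hirr n
    have h' : (cfq α (n+1) : ℝ) ≤ ((cfa α n : ℝ) + 1) * (cfq α n : ℝ) := by exact_mod_cast h
    calc (cfq α (n+1) : ℝ) ≤ ((cfa α n : ℝ) + 1) * (cfq α n : ℝ) := h'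
      _ ≤ (2 / gaussIter α n) * (cfq α n : ℝ) := mul_le_mul_of_nonneg_right ha hq.le
  have hlog := Real.log_le_log hq1 hk
  rw [Real.log_mul (by positivity) (ne_of_gt hq)] at hlog
  have h2x : Real.log (2 / gaussIter α n) = Real.log 2 + Real.log (1 / gaussIter α n) := by
    rw [div_eq_mul_inv, Real.log_mul (by norm_num) (by positivity), one_div]
  linarith
  
lemma log_K2 (n : ℕ) :
    Real.log (1 / gaussIter α n) ≤ Real.log 2 + (Real.log (cfq α (n+1) : ℝ) - Real.log (cfq α n : ℝ)) := by
  have hx := gauss_pos hα hirr n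
  have hq := cfq_real_pos hα hirr n
  have hq1 := cfq_real_pos hα hirr (n+1)
  have hxi := one_lt_inv_gauss hα hirr n
  have ha1 : (1:ℝ) ≤ (cfa α n : ℝ) := by exact_mod_cast cfa_ge_one hα hirr n
  have hfl : 1 / gaussIter α n ≤ (cfa α n : ℝ) + 1 := le_of_lt (Int.lt_floor_add_one _)
  have hk : (1 / gaussIter α n) * (cfq α n : ℝ) ≤ 2 * (cfq α (n+1) : ℝ) := by
    have h := cfa_le_cfq_succ hα hirr n
    have h' : (cfa α n : ℝ) * (cfq α n : ℝ) ≤ (cfq α (n+1) : ℝ) := by exact_mod_cast h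
    nlinarith
  have hk' : (1 / gaussIter α n) ≤ 2 * (cfq α (n+1) : ℝ) / (cfq α n : ℝ) := by
    rw [le_div_iff₀ hq]; linarith
  have hlog := Real.log_le_log (by positivity) hk'
  rw [Real.log_div (by positivity) (ne_of_gt hq), Real.log_mul (by norm_num) (ne_of_gt hq1)] at hlog
  linarith

lemma ug_nonneg (n : ℕ) : 0 ≤ ug α n :=
  mul_nonneg (bg_pos hα hirr n).le (log_inv_gauss_nonneg hα hirr n)

lemma bg_le_inv_cfq (n : ℕ) : bg α n ≤ 1 / (cfq α n : ℝ) := by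
  have h := bg_cfq_le hα hirr n
  have hq := cfq_real_pos hα hirr n
  rw [le_div_iff₀ hq]; linarith [mul_comm (bg α n) ((cfq α n : ℝ))]

lemma inv_cfq_le_two_bg (n : ℕ) : 1 / (cfq α n : ℝ) ≤ 2 * bg α n := by
  have h := one_le_two_bg_cfq hα hirr n
  have hq := cfq_real_pos hα hirr n
  rw [div_le_iff₀ hq]; nlinarith

lemma summable_ug_iff :
    Summable (ug α) ↔ Summable (fun n : ℕ => Real.log ((cfq α (n + 1) : ℝ)) / ((cfq α n : ℝ))) := by
  constructor
  · intro hu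
    have haux : Summable (fun n => 2 * Real.log 2 * bg α n + 2 * ug α n
        + Real.log (cfq α n : ℝ) / (cfq α n : ℝ)) :=
      (((summable_bg hα hirr).mul_left _).add (hu.mul_left _)).add (summable_log_cfq hα hirr)
    refine Summable.of_nonneg_of_le (fun n => ?_) (fun n => ?_) haux
    · have hq := cfq_real_pos hα hirr n
      have := log_cfq_nonneg hα hirr (n+1)
      positivity
    · have hq := cfq_real_pos hα hirr n
      have hb := bg_pos hα hirr n
      have hl := log_K1 hα hirr n
      have hbi := inv_cfq_le_two_bg hα hirr n
      have hlog2 : (0:ℝ) ≤ Real.log 2 := Real.log_nonneg (by norm_num)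
      have hlx := log_inv_gauss_nonneg hα hirr n
      have hlq := log_cfq_nonneg hα hirr n
      have key : Real.log (cfq α (n+1) : ℝ) / (cfq α n : ℝ)
          = (Real.log (cfq α (n+1) : ℝ) - Real.log (cfq α n : ℝ)) / (cfq α n : ℝ)
            + Real.log (cfq α n : ℝ) / (cfq α n : ℝ) := by ring
      rw [key]
      have hdiff_nonneg : 0 ≤ Real.log (cfq α (n+1) : ℝ) - Real.log (cfq α n : ℝ) := by
        have hm : (cfq α n : ℝ) ≤ (cfq α (n+1) : ℝ) := by exact_mod_cast cfq_mono hα hirr n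
        have := Real.log_le_log hq hm
        linarith
      have h1 : (Real.log (cfq α (n+1) : ℝ) - Real.log (cfq α n : ℝ)) / (cfq α n : ℝ)
          ≤ (Real.log 2 + Real.log (1 / gaussIter α n)) * (1 / (cfq α n : ℝ)) := by
        rw [div_eq_mul_inv, ← one_div]
        apply mul_le_mul_of_nonneg_right (by linarith) (by positivity)
      have h2 : (Real.log 2 + Real.log (1 / gaussIter α n)) * (1 / (cfq α n : ℝ))
          ≤ (Real.log 2 + Real.log (1 / gaussIter α n)) * (2 * bg α n) := by
        apply mul_le_mul_of_nonneg_left hbi (by linarith)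
      have h3 : (Real.log 2 + Real.log (1 / gaussIter α n)) * (2 * bg α n)
          = 2 * Real.log 2 * bg α n + 2 * ug α n := by
        unfold ug; ring
      linarith
  · intro hv
    have haux : Summable (fun n => Real.log 2 * bg α n
        + Real.log ((cfq α (n + 1) : ℝ)) / ((cfq α n : ℝ))) :=
      ((summable_bg hα hirr).mul_left _).add hv
    refine Summable.of_nonneg_of_le (fun n => ug_nonneg hα hirr n) (fun n => ?_) haux
    have hq := cfq_real_pos hα hirr n
    have hb := bg_pos hα hirr n
    have hl := log_K2 hα hirr n
    have hbl := bg_le_inv_cfq hα hirr n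
    have hlog2 : (0:ℝ) ≤ Real.log 2 := Real.log_nonneg (by norm_num)
    have hlq := log_cfq_nonneg hα hirr n
    have hlq1 := log_cfq_nonneg hα hirr (n+1)
    have hlx := log_inv_gauss_nonneg hα hirr n
    have h1 : ug α n ≤ bg α n * (Real.log 2 + Real.log (cfq α (n+1) : ℝ) - Real.log (cfq α n : ℝ)) := by
      unfold ug
      apply mul_le_mul_of_nonneg_left (by linarith) hb.le
    have h2 : bg α n * Real.log (cfq α (n+1) : ℝ) ≤ Real.log (cfq α (n+1) : ℝ) / (cfq α n : ℝ) := by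
      rw [div_eq_mul_inv, ← one_div, mul_comm]
      apply mul_le_mul_of_nonneg_left hbl hlq1
    nlinarith [mul_nonneg hb.le hlq]
end Dev3

lemma abs_sub_round_lt_half (m : ℤ) (f : ℝ) (h0 : 0 < f) (h1 : f < 1/2) :
    |((m:ℝ) + f) - round ((m:ℝ) + f)| = f := by
  rw [round_intCast_add]
  have hf : round f = 0 := by
    rw [round_eq]
    apply Int.floor_eq_zero_iff.mpr
    constructor
    · linarith
    · show f + 1/2 < 1; linarith
  rw [hf, add_zero]
  have : ((m:ℝ) + f) - (m:ℝ) = f := by ring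
  rw [this, abs_of_pos h0]

lemma abs_sub_round_gt_half (m : ℤ) (f : ℝ) (h0 : 1/2 < f) (h1 : f < 1) :
    |((m:ℝ) + f) - round ((m:ℝ) + f)| = 1 - f := by
  rw [round_intCast_add]
  have hf : round f = 1 := by
    rw [round_eq]
    refine Int.floor_eq_iff.mpr ⟨by push_cast; linarith, by push_cast; linarith⟩
  rw [hf]
  push_cast
  rw [show ((m:ℝ) + f) - ((m:ℝ) + 1) = f - 1 by ring, abs_of_neg (by linarith)]
  ring

noncomputable def km (α : ℝ) : ℕ → ℕ
  | 0 => if α < 1/2 then 0 else 1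
  | n + 1 => if gaussIter α (km α n + 1) < 1/2 then km α n + 1 else km α n + 2

section Dev4
variable {α : ℝ} (hα : α ∈ Set.Ioo (0 : ℝ) 1) (hirr : Irrational α)
include hα hirr

lemma gauss_ne_half (n : ℕ) : gaussIter α n ≠ 1/2 := by
  intro h
  exact (gauss_irr hα hirr n) ⟨1/2, by rw [h]; norm_num⟩

lemma fold_cfa (k : ℕ) (hh : 1/2 < gaussIter α k) : cfa α k = 1 := by
  have hx0 := gauss_pos hα hirr k
  have hx1 := gauss_lt_one hα hirr k
  unfold cfa
  refine Int.floor_eq_iff.mpr ⟨?_, ?_⟩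
  · push_cast; linarith [one_lt_inv_gauss hα hirr k]
  · push_cast
    rw [div_lt_iff₀ hx0]; linarith

lemma fold_eq (k : ℕ) (hh : 1/2 < gaussIter α k) :
    1 - gaussIter α k = gaussIter α k * gaussIter α (k+1) ∧
    1 - gaussIter α k = gaussIter α (k+1) / (1 + gaussIter α (k+1)) := by
  have hx0 := gauss_pos hα hirr k
  have hx1 := gauss_lt_one hα hirr k
  have hs : gaussIter α (k+1) = 1 / gaussIter α k - 1 := by
    rw [gauss_succ, fold_cfa hα hirr k hh]; norm_num
  have hx0' := gauss_pos hα hirr (k+1)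
  constructor
  · rw [hs]; field_simp
  · rw [hs]; field_simp; ring

/-- The main invariant relating the nearest-integer CF orbit to the Gauss orbit. -/
lemma modCF_inv : ∀ n, (modCF α n = gaussIter α (km α n) ∨
      modCF α n = gaussIter α (km α n) / (1 + gaussIter α (km α n))) ∧
    (∏ i ∈ Finset.range n, modCF α (i+1)) * bg α (km α 0 + 1) = bg α (km α n + 1) := by
  intro n
  induction n with
  | zero =>
    refine ⟨?_, by simp⟩
    have h0 : modCF α 0 = |α - round α| := rfl
    have hx0 : gaussIter α 0 = α := rfl
    have hαhalf : α ≠ 1/2 := by simpa [hx0] using gauss_ne_half hα hirr 0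
    by_cases hc : α < 1/2
    · left
      have hkm0 : km α 0 = 0 := by simp only [km]; rw [if_pos hc]
      rw [hkm0, hx0, h0]
      simpa using abs_sub_round_lt_half 0 α hα.1 hc
    · right
      have hc' : 1/2 < α := lt_of_le_of_ne (not_lt.mp hc) (Ne.symm hαhalf)
      have hkm0 : km α 0 = 1 := by simp only [km]; rw [if_neg hc]
      rw [hkm0, h0]
      have habs : |α - round α| = 1 - α := by
        simpa using abs_sub_round_gt_half 0 α hc' hα.2
      rw [habs]
      have := (fold_eq hα hirr 0 (by rwa [hx0])).2
      rw [hx0] at this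
      exact this
  | succ n ih =>
    obtain ⟨hform, hprod⟩ := ih
    set k := km α n with hk
    have hx0 := gauss_pos hα hirr k
    have hx1 := gauss_lt_one hα hirr k
    have hy0 : 0 < modCF α n := by
      rcases hform with h | h <;> rw [h] <;> positivity
    obtain ⟨m, hm⟩ : ∃ m : ℤ, 1 / modCF α n = (m:ℝ) + gaussIter α (k+1) := by
      rcases hform with h | h
      · exact ⟨cfa α k, by rw [h, inv_gauss_eq]⟩
      · refine ⟨cfa α k + 1, ?_⟩
        rw [h]
        have hne0 : gaussIter α k ≠ 0 := ne_of_gt hx0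
        have hstep : 1 / (gaussIter α k / (1 + gaussIter α k)) = 1 / gaussIter α k + 1 := by
          field_simp
        rw [hstep, inv_gauss_eq]
        push_cast; ring
    have hmod : modCF α (n+1) = |1 / modCF α n - round (1 / modCF α n)| := rfl
    have hx10 := gauss_pos hα hirr (k+1)
    have hx11 := gauss_lt_one hα hirr (k+1)
    have hne := gauss_ne_half hα hirr (k+1)
    by_cases hc : gaussIter α (k+1) < 1/2
    · -- no fold : km (n+1) = k+1
      have hkm : km α (n+1) = k + 1 := by simp only [km, ← hk]; rw [if_pos hc]
      have hval : modCF α (n+1) = gaussIter α (k+1) := by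
        rw [hmod, hm, abs_sub_round_lt_half m _ hx10 hc]
      refine ⟨Or.inl (by rw [hkm, hval]), ?_⟩
      rw [Finset.prod_range_succ, hkm, hval,
        show bg α (k+1+1) = bg α (k+1) * gaussIter α (k+1) from bg_succ _, ← hprod]
      ring
    · -- fold : km (n+1) = k+2
      have hc' : 1/2 < gaussIter α (k+1) := lt_of_le_of_ne (not_lt.mp hc) (Ne.symm hne)
      have hkm : km α (n+1) = k + 2 := by simp only [km, ← hk]; rw [if_neg hc]
      have hval : modCF α (n+1) = 1 - gaussIter α (k+1) := by
        rw [hmod, hm, abs_sub_round_gt_half m _ hc' hx11]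
      obtain ⟨hmul, hdiv⟩ := fold_eq hα hirr (k+1) hc'
      refine ⟨Or.inr (by rw [hkm, hval, show k+2 = k+1+1 from rfl, ← hdiv]), ?_⟩
      rw [Finset.prod_range_succ, hkm, hval,
        show bg α (k+2+1) = bg α (k+1) * gaussIter α (k+1) * gaussIter α (k+2)
          from by rw [show k+2+1 = (k+1)+1+1 from rfl, bg_succ, bg_succ],
        ← hprod, hmul]
      ring
end Dev4

noncomputable def wm (α : ℝ) (n : ℕ) : ℝ :=
  (∏ i ∈ Finset.range n, modCF α (i+1)) * Real.log (1 / modCF α (n+1))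

section Dev5
variable {α : ℝ} (hα : α ∈ Set.Ioo (0 : ℝ) 1) (hirr : Irrational α)
include hα hirr

lemma bg_le_one (n : ℕ) : bg α n ≤ 1 := by
  apply Finset.prod_le_one
  · exact fun i _ => (gauss_pos hα hirr i).le
  · exact fun i _ => (gauss_lt_one hα hirr i).le

lemma modCF_pos (n : ℕ) : 0 < modCF α n := by
  rcases (modCF_inv hα hirr n).1 with h | h <;> rw [h]
  · exact gauss_pos hα hirr _
  · have h1 := gauss_pos hα hirr (km α n)
    positivity

lemma modCF_le_gauss (n : ℕ) : modCF α n ≤ gaussIter α (km α n) := by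
  rcases (modCF_inv hα hirr n).1 with h | h <;> rw [h]
  · have h1 := gauss_pos hα hirr (km α n)
    rw [div_le_iff₀ (by positivity)]
    nlinarith
  
lemma gauss_le_two_modCF (n : ℕ) : gaussIter α (km α n) ≤ 2 * modCF α n := by
  rcases (modCF_inv hα hirr n).1 with h | h <;> rw [h]
  · have h1 := gauss_pos hα hirr (km α n); linarith
  · have h1 := gauss_pos hα hirr (km α n)
    have h2 := gauss_lt_one hα hirr (km α n)
    rw [← mul_div_assoc, le_div_iff₀ (by positivity)]
    nlinarith

lemma modCF_lt_one (n : ℕ) : modCF α n < 1 :=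
  lt_of_le_of_lt (modCF_le_gauss hα hirr n) (gauss_lt_one hα hirr _)

omit hα hirr in
lemma km_succ_cases (n : ℕ) : km α (n+1) = km α n + 1 ∨
    (km α (n+1) = km α n + 2 ∧ ¬ gaussIter α (km α n + 1) < 1/2) := by
  by_cases hc : gaussIter α (km α n + 1) < 1/2
  · left; simp only [km]; rw [if_pos hc]
  · right; refine ⟨?_, hc⟩; simp only [km]; rw [if_neg hc]

omit hα hirr in
lemma km_strictMono : StrictMono (km α) := by
  apply strictMono_nat_of_lt_succ
  intro n
  rcases km_succ_cases (α := α) n with h | ⟨h, _⟩ <;> omega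

omit hα hirr in
lemma km_ge (n : ℕ) : n ≤ km α n := by
  induction n with
  | zero => exact Nat.zero_le _
  | succ n ih =>
    have h2 : km α n < km α (n + 1) := km_strictMono (α := α) (by omega)
    omega

lemma bg_km_le (n : ℕ) : bg α (km α n + 1) ≤ 2 * bg α (km α (n+1)) ∧
    bg α (km α (n+1)) ≤ bg α (km α n + 1) := by
  have hb := bg_pos hα hirr (km α n + 1)
  rcases km_succ_cases (α := α) n with h | ⟨h, hh⟩
  · rw [h]; constructor <;> linarith
  · have hh' : 1/2 < gaussIter α (km α n + 1) :=
      lt_of_le_of_ne (not_lt.mp hh) (Ne.symm (gauss_ne_half hα hirr _))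
    have hx1 := gauss_lt_one hα hirr (km α n + 1)
    rw [h, show bg α (km α n + 2) = bg α (km α n + 1) * gaussIter α (km α n + 1) from bg_succ _]
    constructor <;> nlinarith

lemma log_modCF_bounds (n : ℕ) :
    Real.log (1 / gaussIter α (km α n)) ≤ Real.log (1 / modCF α n) ∧
    Real.log (1 / modCF α n) ≤ Real.log 2 + Real.log (1 / gaussIter α (km α n)) := by
  have hy := modCF_pos hα hirr n
  have hx := gauss_pos hα hirr (km α n)
  have h1 := modCF_le_gauss hα hirr n
  have h2 := gauss_le_two_modCF hα hirr n
  constructor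
  · apply Real.log_le_log (by positivity)
    rw [div_le_div_iff₀ hx hy]; linarith
  · have h3 : 1 / modCF α n ≤ 2 / gaussIter α (km α n) := by
      rw [div_le_div_iff₀ hy hx]; linarith
    calc Real.log (1 / modCF α n) ≤ Real.log (2 / gaussIter α (km α n)) :=
        Real.log_le_log (by positivity) h3
      _ = Real.log 2 + Real.log (1 / gaussIter α (km α n)) := by
        rw [div_eq_mul_inv, Real.log_mul (by norm_num) (by positivity), one_div]

lemma wm_nonneg (n : ℕ) : 0 ≤ wm α n := by
  apply mul_nonneg
  · exact Finset.prod_nonneg fun i _ => (modCF_pos hα hirr _).le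
  · apply Real.log_nonneg
    rw [le_div_iff₀ (modCF_pos hα hirr _)]
    linarith [modCF_lt_one hα hirr (n+1)]

lemma wm_lower (n : ℕ) : ug α (km α (n+1)) ≤ wm α n := by
  set c := bg α (km α 0 + 1) with hc
  have hc0 : 0 < c := bg_pos hα hirr _
  have hc1 : c ≤ 1 := bg_le_one hα hirr _
  have hprod := (modCF_inv hα hirr n).2
  have hwm : c * wm α n = bg α (km α n + 1) * Real.log (1 / modCF α (n+1)) := by
    rw [wm, ← hprod]; ring
  have hK := bg_km_le hα hirr n
  have hlog := (log_modCF_bounds hα hirr (n+1)).1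
  have hlx : 0 ≤ Real.log (1 / gaussIter α (km α (n+1))) := log_inv_gauss_nonneg hα hirr _
  have hb := bg_pos hα hirr (km α (n+1))
  have h1 : ug α (km α (n+1)) ≤ c * wm α n := by
    rw [hwm, ug]
    calc bg α (km α (n+1)) * Real.log (1 / gaussIter α (km α (n+1)))
        ≤ bg α (km α n + 1) * Real.log (1 / gaussIter α (km α (n+1))) :=
          mul_le_mul_of_nonneg_right hK.2 hlx
      _ ≤ bg α (km α n + 1) * Real.log (1 / modCF α (n+1)) :=
          mul_le_mul_of_nonneg_left hlog (bg_pos hα hirr _).le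
  have hw := wm_nonneg hα hirr n
  nlinarith

lemma wm_upper (n : ℕ) : wm α n ≤ (bg α (km α 0 + 1))⁻¹ *
    (2 * (Real.log 2 * bg α (km α (n+1)) + ug α (km α (n+1)))) := by
  set c := bg α (km α 0 + 1) with hc
  have hc0 : 0 < c := bg_pos hα hirr _
  have hprod := (modCF_inv hα hirr n).2
  have hwm : c * wm α n = bg α (km α n + 1) * Real.log (1 / modCF α (n+1)) := by
    rw [wm, ← hprod]; ring
  have hK := bg_km_le hα hirr n
  have hlog := (log_modCF_bounds hα hirr (n+1)).2
  have hlx : 0 ≤ Real.log (1 / gaussIter α (km α (n+1))) := log_inv_gauss_nonneg hα hirr _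
  have hly : 0 ≤ Real.log (1 / modCF α (n+1)) := by
    rw [wm] at *
    apply Real.log_nonneg
    rw [le_div_iff₀ (modCF_pos hα hirr _)]
    linarith [modCF_lt_one hα hirr (n+1)]
  have hb := bg_pos hα hirr (km α (n+1))
  have hb1 := bg_pos hα hirr (km α n + 1)
  have hlog2 : (0:ℝ) ≤ Real.log 2 := Real.log_nonneg (by norm_num)
  have h1 : c * wm α n ≤ 2 * (Real.log 2 * bg α (km α (n+1)) + ug α (km α (n+1))) := by
    rw [hwm, ug]
    calc bg α (km α n + 1) * Real.log (1 / modCF α (n+1))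
        ≤ bg α (km α n + 1) * (Real.log 2 + Real.log (1 / gaussIter α (km α (n+1)))) :=
          mul_le_mul_of_nonneg_left hlog hb1.le
      _ ≤ (2 * bg α (km α (n+1))) * (Real.log 2 + Real.log (1 / gaussIter α (km α (n+1)))) :=
          mul_le_mul_of_nonneg_right hK.1 (by linarith)
      _ = 2 * (Real.log 2 * bg α (km α (n+1))
          + bg α (km α (n+1)) * Real.log (1 / gaussIter α (km α (n+1)))) := by ring
  rw [inv_mul_eq_div, le_div_iff₀ hc0]
  linarith [mul_comm (wm α n) c]

lemma km_classify (m : ℕ) (hm : km α 0 < m) :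
    (∃ n, km α (n+1) = m) ∨ 1/2 < gaussIter α m := by
  classical
  have hex : ∃ N, m ≤ km α N := ⟨m, km_ge (α := α) m⟩
  obtain ⟨n, hn⟩ : ∃ n, Nat.find hex = n + 1 := by
    refine Nat.exists_eq_succ_of_ne_zero ?_
    intro h
    have := Nat.find_spec hex
    rw [h] at this
    omega
  have hspec : m ≤ km α (n+1) := hn ▸ Nat.find_spec hex
  have hlt : km α n < m := by
    have := Nat.find_min hex (show n < Nat.find hex by omega)
    omega
  rcases km_succ_cases (α := α) n with h | ⟨h, hh⟩
  · left; exact ⟨n, by omega⟩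
  · rw [h] at hspec
    rcases Nat.lt_or_ge m (km α n + 2) with hm2 | hm2
    · right
      have : m = km α n + 1 := by omega
      rw [this]
      exact lt_of_le_of_ne (not_lt.mp hh) (Ne.symm (gauss_ne_half hα hirr _))
    · left; exact ⟨n, by omega⟩

lemma summable_wm_iff : Summable (wm α) ↔ Summable (ug α) := by
  have hφinj : Function.Injective (fun n => km α (n+1)) :=
    fun a b hab => by
      have := km_strictMono (α := α).injective (show km α (a+1) = km α (b+1) from hab)
      omega
  constructor
  · intro hw
    set S : Set ℕ := Set.range (fun n => km α (n+1)) with hS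
    have hcomp : Summable (fun n => ug α (km α (n+1))) :=
      Summable.of_nonneg_of_le (fun n => ug_nonneg hα hirr _) (fun n => wm_lower hα hirr n) hw
    have h1 : Summable (S.indicator (ug α)) := by
      refine (hφinj.summable_iff (fun x hx => Set.indicator_of_notMem hx (ug α))).mp ?_
      refine hcomp.congr fun n => ?_
      show ug α (km α (n+1)) = S.indicator (ug α) (km α (n+1))
      exact (Set.indicator_of_mem (Set.mem_range_self (f := fun n => km α (n+1)) n) (ug α)).symm
    have haux : Summable (fun m => if m ≤ km α 0 then ug α m else 0) := by
      apply summable_of_ne_finset_zero (s := Finset.range (km α 0 + 1))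
      intro m hm
      simp only [Finset.mem_range] at hm
      rw [if_neg (by omega)]
    have h2 : Summable (Sᶜ.indicator (ug α)) := by
      refine Summable.of_nonneg_of_le (fun m => Set.indicator_nonneg (fun m _ => ug_nonneg hα hirr m) m)
        (fun m => ?_) (((summable_bg hα hirr).mul_left (Real.log 2)).add haux)
      have hlog2 : (0:ℝ) ≤ Real.log 2 := Real.log_nonneg (by norm_num)
      have hbm := bg_pos hα hirr m
      have haux_nonneg : 0 ≤ (if m ≤ km α 0 then ug α m else 0) := by
        split
        · exact ug_nonneg hα hirr m
        · exact le_rfl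
      by_cases hmem : m ∈ S
      · rw [Set.indicator_of_notMem (Set.notMem_compl_iff.mpr hmem)]
        linarith [mul_nonneg hlog2 hbm.le]
      · rw [Set.indicator_of_mem (by simpa using hmem)]
        by_cases hsmall : m ≤ km α 0
        · rw [if_pos hsmall]
          linarith [mul_nonneg hlog2 hbm.le]
        · rw [if_neg hsmall, add_zero]
          have hclass := km_classify hα hirr m (by omega)
          have hhalf : 1/2 < gaussIter α m := by
            rcases hclass with ⟨n, hn⟩ | h
            · exact absurd ⟨n, hn⟩ hmem
            · exact h
          have hxlt : 1 / gaussIter α m ≤ 2 := by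
            rw [div_le_iff₀ (gauss_pos hα hirr m)]; linarith
          have hll : Real.log (1 / gaussIter α m) ≤ Real.log 2 :=
            Real.log_le_log (by positivity) hxlt
          calc ug α m = bg α m * Real.log (1 / gaussIter α m) := rfl
            _ ≤ bg α m * Real.log 2 := mul_le_mul_of_nonneg_left hll hbm.le
            _ = Real.log 2 * bg α m := by ring
    have := h1.add h2
    refine this.congr fun m => ?_
    exact congrFun (Set.indicator_self_add_compl S (ug α)) m
  · intro hu
    have hg : Summable (fun m => (bg α (km α 0 + 1))⁻¹ *
        (2 * (Real.log 2 * bg α m + ug α m))) :=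
      ((((summable_bg hα hirr).mul_left (Real.log 2)).add hu).mul_left 2).mul_left _
    have hgφ := hg.comp_injective hφinj
    exact Summable.of_nonneg_of_le (fun n => wm_nonneg hα hirr n)
      (fun n => wm_upper hα hirr n) hgφ
end Dev5

section Dev6
variable {α : ℝ} (hα : α ∈ Set.Ioo (0 : ℝ) 1) (hirr : Irrational α)
include hα hirr

lemma sProd_eq (K : ℕ) : sProd α K = Real.exp (- ∑ j ∈ Finset.range K, wm α j) := by
  rw [show (- ∑ j ∈ Finset.range K, wm α j) = ∑ j ∈ Finset.range K, (- wm α j) by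
    rw [Finset.sum_neg_distrib]]
  rw [Real.exp_sum]
  apply Finset.prod_congr rfl
  intro j _
  have hy := modCF_pos hα hirr (j+1)
  rw [Real.rpow_def_of_pos hy]
  congr 1
  rw [wm, one_div, Real.log_inv]
  ring

lemma tendsto_sProd_iff : Tendsto (sProd α) atTop (nhds 0) ↔ ¬ Summable (wm α) := by
  constructor
  · intro ht hsum
    have hT : Tendsto (fun K => ∑ j ∈ Finset.range K, wm α j) atTop (nhds (∑' j, wm α j)) :=
      hsum.hasSum.tendsto_sum_nat
    have h2 : Tendsto (sProd α) atTop (nhds (Real.exp (- ∑' j, wm α j))) := by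
      have := (Real.continuous_exp.tendsto _).comp hT.neg
      refine this.congr fun K => (sProd_eq hα hirr K).symm
    have := tendsto_nhds_unique ht h2
    exact absurd this.symm (ne_of_gt (Real.exp_pos _))
  · intro hsum
    have hT : Tendsto (fun K => ∑ j ∈ Finset.range K, wm α j) atTop atTop := by
      by_contra h
      exact hsum ((summable_iff_not_tendsto_nat_atTop_of_nonneg
        (fun n => wm_nonneg hα hirr n)).mpr h)
    have h2 : Tendsto (fun K => - ∑ j ∈ Finset.range K, wm α j) atTop atBot :=
      tendsto_neg_atTop_atBot.comp hT
    have h3 := Real.tendsto_exp_atBot.comp h2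
    exact Tendsto.congr (fun K => (sProd_eq hα hirr K).symm) h3

theorem main_result :
    Tendsto (sProd α) atTop (nhds 0) ↔
      ¬ Summable (fun n : ℕ => Real.log ((cfq α (n + 1) : ℝ)) / ((cfq α n : ℝ))) := by
  rw [tendsto_sProd_iff hα hirr, summable_wm_iff hα hirr, summable_ug_iff hα hirr]
end Dev6


/-- The sequence `α₁ · α₂^{α₁} · α₃^{α₁α₂} ⋯ α_k^{α₁⋯α_{k-1}}` tends to `0` iff the
Brjuno series `∑ (log q_{n+1})/qₙ` diverges. -/
theorem sProd_tendsto_zero_iff_nonBrjuno (α : ℝ) (hα : α ∈ Set.Ioo (0 : ℝ) 1)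
    (hirr : Irrational α) :
    Tendsto (sProd α) atTop (nhds 0) ↔
      ¬ Summable (fun n : ℕ => Real.log ((cfq α (n + 1) : ℝ)) / ((cfq α n : ℝ))) := by
  exact main_result hα hirr
end

section
/- There exists a constant c > 0 such that for every α ∈ (0,1/2], every r ∈ (0,1/2), and every w ∈ ℂ satisfying |w − n/α| ≥ r/α for all integers n, one has |1 − e^{−2πiαw}| ≥ c·r·e^{2πα·Im w}. Consequently, for any σ ∈ ℂ, the point τ(w) = σ/(1 − e^{−2πiαw}) satisfies |τ(w)| ≤ (1/c)·(|σ|/r)·e^{−2πα·Im w}. -/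
open Complex

lemma exp_pi_le : Real.exp Real.pi ≤ 55 := by
  have h1 : Real.exp Real.pi ≤ Real.exp 4 :=
    Real.exp_le_exp.2 Real.pi_le_four
  have h2 : Real.exp ((4:ℕ):ℝ) = Real.exp 1 ^ (4:ℕ) := (Real.exp_one_pow 4).symm
  have h3 : Real.exp 1 ^ (4:ℕ) ≤ 2.7182818286 ^ (4:ℕ) :=
    pow_le_pow_left₀ (Real.exp_pos 1).le Real.exp_one_lt_d9.le 4
  have h4 : (2.7182818286:ℝ) ^ (4:ℕ) ≤ 55 := by norm_num
  have h5 : ((4:ℕ):ℝ) = (4:ℝ) := by norm_num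
  calc Real.exp Real.pi ≤ Real.exp 4 := h1
    _ = Real.exp 1 ^ (4:ℕ) := by rw [← h2, h5]
    _ ≤ 2.7182818286 ^ (4:ℕ) := h3
    _ ≤ 55 := h4

set_option maxHeartbeats 1000000 in
lemma key_lower (x y r : ℝ) (hr : 0 < r) (hr2 : r < 1/2)
    (h : ∀ n : ℤ, r ^ 2 ≤ (x - n)^2 + y^2)
    (E : ℂ) (hEre : E.re = Real.exp (2*Real.pi*y) * Real.cos (2*Real.pi*x))
    (hEim : |E.im| = Real.exp (2*Real.pi*y) * |Real.sin (2*Real.pi*x)|)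
    (hEabs : ‖E‖ = Real.exp (2*Real.pi*y)) :
    (1/1000) * r * Real.exp (2*Real.pi*y) ≤ ‖1 - E‖ := by
  have hπ3 : 3 < Real.pi := Real.pi_gt_three
  have hπ4 : Real.pi ≤ 4 := Real.pi_le_four
  have hEy : (0:ℝ) < Real.exp (2*Real.pi*y) := Real.exp_pos _
  rcases le_or_gt 2 (Real.exp (2*Real.pi*y)) with hA | hB
  · have h1 : ‖E‖ - ‖(1:ℂ)‖ ≤ ‖E - 1‖ := norm_sub_norm_le E 1
    rw [norm_one, norm_sub_rev] at h1
    rw [hEabs] at h1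
    nlinarith
  · have hsuff : r/500 ≤ ‖1 - E‖ → (1/1000) * r * Real.exp (2*Real.pi*y) ≤ ‖1 - E‖ := by
      intro hs; nlinarith
    apply hsuff
    rcases le_or_gt y (-(1/2)) with hy | hy
    · have h1 : ‖(1:ℂ)‖ - ‖E‖ ≤ ‖1 - E‖ := norm_sub_norm_le 1 E
      rw [norm_one, hEabs] at h1
      have h2 : Real.exp (2*Real.pi*y) ≤ Real.exp (-1) := by
        apply Real.exp_le_exp.2; nlinarith
      have h3 : Real.exp (-1) ≤ 1/2 := by
        rw [Real.exp_neg]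
        rw [inv_le_comm₀ (Real.exp_pos 1) (by norm_num)]
        have := Real.add_one_le_exp (1:ℝ)
        linarith
      nlinarith
    · set n : ℤ := round x with hn
      set t : ℝ := x - n with htdef
      set d : ℝ := |t| with hd
      have hd2 : d ≤ 1/2 := _root_.abs_sub_round x
      have hd0 : 0 ≤ d := abs_nonneg t
      have hrd : r^2 ≤ d^2 + y^2 := by
        have h1 : r^2 ≤ t^2 + y^2 := h n
        rwa [hd, _root_.sq_abs]
      have hsin : |Real.sin (2*Real.pi*x)| = Real.sin (2*Real.pi*d) := by
        have hx : 2*Real.pi*x = 2*Real.pi*t + n * (2*Real.pi) := by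
          rw [htdef]; ring
        rw [hx, Real.sin_add_int_mul_two_pi]
        rcases _root_.abs_cases t with ⟨h1, ht0⟩ | ⟨h1, ht0⟩
        · have hdt : d = t := hd.trans h1
          have htt : t ≤ 1/2 := by rw [← hdt]; exact hd2
          rw [hd, h1, _root_.abs_of_nonneg]
          exact Real.sin_nonneg_of_nonneg_of_le_pi
            (by nlinarith [mul_nonneg Real.pi_pos.le ht0])
            (by nlinarith [mul_nonneg Real.pi_pos.le (by linarith : (0:ℝ) ≤ 1/2 - t)])
        · have hdt : d = -t := hd.trans h1
          have htt : -t ≤ 1/2 := by rw [← hdt]; exact hd2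
          rw [hd, h1]
          have he : 2*Real.pi*t = -(2*Real.pi*(-t)) := by ring
          rw [he, Real.sin_neg, _root_.abs_neg, _root_.abs_of_nonneg]
          exact Real.sin_nonneg_of_nonneg_of_le_pi
            (by nlinarith [mul_nonneg Real.pi_pos.le (by linarith : (0:ℝ) ≤ -t)])
            (by nlinarith [mul_nonneg Real.pi_pos.le (by linarith : (0:ℝ) ≤ 1/2 - (-t))])
      have hcos : Real.cos (2*Real.pi*x) = Real.cos (2*Real.pi*d) := by
        have hx : 2*Real.pi*x = 2*Real.pi*t + n * (2*Real.pi) := by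
          rw [htdef]; ring
        rw [hx, Real.cos_add_int_mul_two_pi]
        rw [hd, ← Real.cos_abs (2*Real.pi*t)]
        congr 1
        rw [abs_mul, _root_.abs_of_nonneg (by positivity : (0:ℝ) ≤ 2*Real.pi)]
      rcases le_or_gt (r^2) (2*y^2) with hyc | hyc
      · have hyy : r/2 ≤ |y| := by
          rcases _root_.abs_cases y with ⟨h1,_⟩|⟨h1,_⟩ <;> nlinarith [abs_nonneg y]
        have h1 : |‖(1:ℂ)‖ - ‖E‖| ≤ ‖1 - E‖ := abs_norm_sub_norm_le 1 E
        rw [norm_one, hEabs] at h1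
        have key : |y| ≤ |1 - Real.exp (2*Real.pi*y)| := by
          rcases le_or_gt 0 y with hy0 | hy0
          · have he := Real.add_one_le_exp (2*Real.pi*y)
            rw [_root_.abs_of_nonneg hy0,
              _root_.abs_of_nonpos (show 1 - Real.exp (2*Real.pi*y) ≤ 0 by nlinarith)]
            nlinarith [mul_nonneg hy0 (by linarith : (0:ℝ) ≤ 2*Real.pi - 1)]
          · have hden : (0:ℝ) < 1 - 2*Real.pi*y := by nlinarith
            have h0 := Real.add_one_le_exp (-(2*Real.pi*y))
            rw [Real.exp_neg] at h0
            have hs' : Real.exp (2*Real.pi*y) * (1 - 2*Real.pi*y) ≤ 1 := by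
              have h1 := mul_le_mul_of_nonneg_left h0 hEy.le
              rw [mul_inv_cancel₀ (ne_of_gt hEy)] at h1
              nlinarith
            have hE1 : Real.exp (2*Real.pi*y) < 1 := by
              rw [← Real.exp_zero]; apply Real.exp_lt_exp.2; nlinarith
            rw [_root_.abs_of_neg hy0,
              _root_.abs_of_nonneg (show (0:ℝ) ≤ 1 - Real.exp (2*Real.pi*y) by linarith)]
            nlinarith [mul_pos (neg_pos.2 hy0)
              (show (0:ℝ) < 2*Real.pi - 1 + 2*Real.pi*y by nlinarith)]
        calc r/500 ≤ |y| := by linarith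
          _ ≤ |1 - Real.exp (2*Real.pi*y)| := key
          _ ≤ ‖1 - E‖ := h1
      · have hdd : r/2 ≤ d := by nlinarith
        rcases le_or_gt d (1/4) with hd4 | hd4
        · have hsin4 : 4*d ≤ Real.sin (2*Real.pi*d) := by
            have hm := Real.mul_le_sin (x := 2*Real.pi*d)
              (by positivity) (by nlinarith)
            have he : 2/Real.pi * (2*Real.pi*d) = 4*d := by
              field_simp; ring
            linarith [he ▸ hm]
          have hexplb : (1:ℝ)/55 ≤ Real.exp (2*Real.pi*y) := by
            have h1 : Real.exp (-Real.pi) ≤ Real.exp (2*Real.pi*y) := by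
              apply Real.exp_le_exp.2; nlinarith
            have h2 : (1:ℝ)/55 ≤ Real.exp (-Real.pi) := by
              rw [Real.exp_neg, one_div]
              exact inv_anti₀ (by positivity) exp_pi_le
            linarith
          have him : |E.im| ≤ ‖1 - E‖ := by
            have h1 := Complex.abs_im_le_norm (1 - E)
            simpa using h1
          rw [hEim, hsin] at him
          calc r/500 ≤ (1/55) * (4*d) := by nlinarith
            _ ≤ Real.exp (2*Real.pi*y) * Real.sin (2*Real.pi*d) :=
                mul_le_mul hexplb hsin4 (by nlinarith) hEy.le
            _ ≤ ‖1 - E‖ := him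
        · have hcosneg : Real.cos (2*Real.pi*d) ≤ 0 := by
            apply Real.cos_nonpos_of_pi_div_two_le_of_le <;> nlinarith
          have hre : |(1 - E).re| ≤ ‖1 - E‖ := by
            have h1 := Complex.abs_re_le_norm (1 - E)
            exact h1
          have h1 : (1 - E).re = 1 - Real.exp (2*Real.pi*y) * Real.cos (2*Real.pi*x) := by
            simp [hEre]
          rw [h1, hcos] at hre
          have h2 : (1:ℝ) ≤ |1 - Real.exp (2*Real.pi*y) * Real.cos (2*Real.pi*d)| := by
            rw [_root_.abs_of_nonneg (by nlinarith)]
            nlinarith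
          calc r/500 ≤ 1 := by nlinarith
            _ ≤ ‖1 - E‖ := le_trans h2 hre

/-- Lower bound for `|1 - e^{-2πiαw}|` away from the lattice `(1/α)ℤ`, and the resulting
upper bound for the covering map `τ(w) = σ/(1 - e^{-2πiαw})`: there is `c > 0` such that
for all `α ∈ (0,1/2]`, `r ∈ (0,1/2)` and `w` with `|w - n/α| ≥ r/α` for all integers `n`,
`|1 - e^{-2πiαw}| ≥ c·r·e^{2πα·Im w}`, hence `|τ(w)| ≤ (1/c)(|σ|/r)·e^{-2πα·Im w}`. -/
theorem covering_estimate :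
    ∃ c : ℝ, 0 < c ∧
      ∀ α ∈ Set.Ioc (0 : ℝ) (1 / 2), ∀ r ∈ Set.Ioo (0 : ℝ) (1 / 2), ∀ w : ℂ,
        (∀ n : ℤ, r / α ≤ ‖w - (n : ℂ) / (α : ℂ)‖) →
        c * r * Real.exp (2 * Real.pi * α * w.im) ≤
            ‖1 - Complex.exp (-(2 * Real.pi * Complex.I * α * w))‖ ∧
          ∀ σ : ℂ,
            ‖σ / (1 - Complex.exp (-(2 * Real.pi * Complex.I * α * w)))‖ ≤
              (1 / c) * (‖σ‖ / r) * Real.exp (-(2 * Real.pi * α * w.im)) := by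
  refine ⟨1/1000, by norm_num, ?_⟩
  rintro α ⟨hα0, hα2⟩ r ⟨hr0, hr2⟩ w hw
  set x : ℝ := α * w.re with hx
  set y : ℝ := α * w.im with hy
  set E : ℂ := Complex.exp (-(2 * Real.pi * Complex.I * α * w)) with hE
  have hzre : (-(2 * (Real.pi:ℂ) * Complex.I * α * w)).re = 2*Real.pi*y := by
    simp [Complex.mul_re, Complex.mul_im, hy]; ring
  have hzim : (-(2 * (Real.pi:ℂ) * Complex.I * α * w)).im = -(2*Real.pi*x) := by
    simp [Complex.mul_re, Complex.mul_im, hx]; ring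
  have hEre : E.re = Real.exp (2*Real.pi*y) * Real.cos (2*Real.pi*x) := by
    rw [hE, Complex.exp_re, hzre, hzim, Real.cos_neg]
  have hEim : |E.im| = Real.exp (2*Real.pi*y) * |Real.sin (2*Real.pi*x)| := by
    rw [hE, Complex.exp_im, hzre, hzim, Real.sin_neg]
    rw [abs_mul, _root_.abs_neg, _root_.abs_of_nonneg (Real.exp_pos _).le]
  have hEabs : ‖E‖ = Real.exp (2*Real.pi*y) := by
    rw [hE, Complex.norm_exp, hzre]
  have hlat : ∀ n : ℤ, r^2 ≤ (x - n)^2 + y^2 := by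
    intro n
    have h1 := hw n
    have hmul : (α:ℂ) * (w - n/α) = (α:ℂ)*w - n := by
      have : (α:ℂ) ≠ 0 := by exact_mod_cast hα0.ne'
      field_simp
    have h2 : r ≤ ‖(α:ℂ)*w - n‖ := by
      calc r = α * (r/α) := by field_simp
        _ ≤ α * ‖w - n/α‖ := mul_le_mul_of_nonneg_left h1 hα0.le
        _ = ‖(α:ℂ)*(w - n/α)‖ := by
            rw [norm_mul, Complex.norm_real, Real.norm_eq_abs,
              _root_.abs_of_pos hα0]
        _ = ‖(α:ℂ)*w - n‖ := by rw [hmul]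
    have hre : ((α:ℂ)*w - n).re = x - n := by simp [hx]
    have him : ((α:ℂ)*w - n).im = y := by simp [hy]
    have h3 : ‖(α:ℂ)*w - n‖^2 = (x - n)^2 + y^2 := by
      rw [Complex.sq_norm, Complex.normSq_apply, hre, him]
      ring
    nlinarith [norm_nonneg ((α:ℂ)*w - n)]
  have hmain := key_lower x y r hr0 hr2 hlat E hEre hEim hEabs
  have hyeq : 2*Real.pi*α*w.im = 2*Real.pi*y := by rw [hy]; ring
  have hmain' : (1/1000) * r * Real.exp (2*Real.pi*α*w.im) ≤ ‖1 - E‖ := by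
    rw [hyeq]; exact hmain
  refine ⟨hmain', fun σ => ?_⟩
  have hpos : (0:ℝ) < (1/1000) * r * Real.exp (2*Real.pi*α*w.im) := by positivity
  calc ‖σ / (1 - E)‖ = ‖σ‖ / ‖1 - E‖ := norm_div σ _
    _ ≤ ‖σ‖ / ((1/1000) * r * Real.exp (2*Real.pi*α*w.im)) :=
        div_le_div_of_nonneg_left (norm_nonneg σ) hpos hmain'
    _ = (1 / (1/1000)) * (‖σ‖ / r) * Real.exp (-(2 * Real.pi * α * w.im)) := by
        rw [Real.exp_neg]
        field_simp
end
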